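/- Stopped supermartingale: assume 𝒮 satisfies Assumption (L)-a.e. If (f_j)_{j≥0} is a supermartingale and τ is a stopping time on 𝒮, then the stopped sequence f^τ_j(S) = f_{min(τ(S), j)}(S) is a supermartingale. -/

import Mathlib

open Filter Set
open scoped Classical ENNReal

noncomputable section

abbrev Traj := ℕ → ℝ

/-- Portfolio value `Π^{V,H}_{j,n}`. -/
def PiVal (j n : ℕ) (V : ℝ) (H : ℕ → Traj → ℝ) (y : Traj) : ℝ :=
  V + ∑ i ∈ Finset.Ico j n, H i y * (y (i + 1) - y i)

/-- Non-anticipativity of a sequence of functions on a set of trajectories. -/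
def NonAnticipOn (A : Set Traj) (H : ℕ → Traj → ℝ) : Prop :=
  ∀ i, ∀ x ∈ A, ∀ y ∈ A, (∀ k ≤ i, x k = y k) → H i x = H i y

/-- Non-anticipativity (at time `j`) of a single extended-real-valued function. -/
def NonAnticipF (A : Set Traj) (j : ℕ) (g : Traj → EReal) : Prop :=
  ∀ x ∈ A, ∀ y ∈ A, (∀ k ≤ j, x k = y k) → g x = g y

/-- Conditional space `𝒮_{(x,j)}`. -/
def Cond (𝒮 : Set Traj) (x : Traj) (j : ℕ) : Set Traj :=
  {y ∈ 𝒮 | ∀ i ≤ j, y i = x i}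

/-- `liminf_{n→∞} Π^{V,H}_{j,n}` as a value in `[0,∞]`. -/
def limInfVal (j : ℕ) (V : ℝ) (H : ℕ → Traj → ℝ) (y : Traj) : ℝ≥0∞ :=
  Filter.liminf (fun n => ENNReal.ofReal (PiVal j n V H y)) Filter.atTop

/-- The conditional null operator `Ī_j` on a set `A` of trajectories. -/
def IUpOn (A : Set Traj) (j : ℕ) (f : Traj → ℝ≥0∞) : ℝ≥0∞ :=
  sInf { c | ∃ (V : ℕ → ℝ) (H : ℕ → ℕ → Traj → ℝ),
    (∀ m, NonAnticipOn A (H m)) ∧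
    (∀ m n, ∀ y ∈ A, 0 ≤ PiVal j n (V m) (H m) y) ∧
    (∀ y ∈ A, f y ≤ ∑' m, limInfVal j (V m) (H m) y) ∧
    c = ∑' m, ENNReal.ofReal (V m) }

/-- `Ī_j f (x)`, conditioned on the node `(x,j)`. -/
def IUp (𝒮 : Set Traj) (j : ℕ) (f : Traj → ℝ≥0∞) (x : Traj) : ℝ≥0∞ :=
  IUpOn (Cond 𝒮 x j) j f

/-- The conditional superhedging outer integral on a set `A`, starting at time `j`. -/
def sigmaUpOn (A : Set Traj) (j : ℕ) (f : Traj → EReal) : EReal :=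
  sInf { c : EReal | ∃ (V0 : ℝ) (H0 : ℕ → Traj → ℝ) (n0 : ℕ) (V : ℕ → ℝ)
      (H : ℕ → ℕ → Traj → ℝ),
    NonAnticipOn A H0 ∧ (∀ m, NonAnticipOn A (H m)) ∧
    (∀ m n, ∀ y ∈ A, 0 ≤ PiVal j n (V m) (H m) y) ∧
    (∀ y ∈ A, f y ≤ (PiVal j n0 V0 H0 y : EReal) +
      ((∑' m, limInfVal j (V m) (H m) y : ℝ≥0∞) : EReal)) ∧
    c = (V0 : EReal) + ((∑' m, ENNReal.ofReal (V m) : ℝ≥0∞) : EReal) }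

/-- `σ̄_j f (x)`. -/
def sigmaUp (𝒮 : Set Traj) (j : ℕ) (f : Traj → EReal) (x : Traj) : EReal :=
  sigmaUpOn (Cond 𝒮 x j) j f

/-- `σ̲_j f (x) = -σ̄_j (-f)(x)`. -/
def sigmaDown (𝒮 : Set Traj) (j : ℕ) (f : Traj → EReal) (x : Traj) : EReal :=
  - sigmaUp 𝒮 j (fun y => - f y) x

/-- A set is `Ī`-null. -/
def NullSet (𝒮 : Set Traj) (E : Set Traj) : Prop :=
  IUpOn 𝒮 0 (fun y => if y ∈ E then 1 else 0) = 0

/-- A property holds `Ī`-almost everywhere on `𝒮`. -/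
def AEOn (𝒮 : Set Traj) (P : Traj → Prop) : Prop :=
  NullSet 𝒮 {y ∈ 𝒮 | ¬ P y}

/-- Property `(L_{(x,j)})`, continuity from below at the node `(x,j)`. -/
def PropL (𝒮 : Set Traj) (x : Traj) (j : ℕ) : Prop :=
  ∀ (V0 : ℝ) (H0 : ℕ → Traj → ℝ) (n0 : ℕ) (V : ℕ → ℝ) (H : ℕ → ℕ → Traj → ℝ),
    NonAnticipOn (Cond 𝒮 x j) H0 → (∀ m, NonAnticipOn (Cond 𝒮 x j) (H m)) →
    (∀ m n, ∀ y ∈ Cond 𝒮 x j, 0 ≤ PiVal j n (V m) (H m) y) →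
    (∀ y ∈ Cond 𝒮 x j, (PiVal j n0 V0 H0 y : EReal) ≤
      ((∑' m, limInfVal j (V m) (H m) y : ℝ≥0∞) : EReal)) →
    (V0 : EReal) ≤ ((∑' m, ENNReal.ofReal (V m) : ℝ≥0∞) : EReal)

/-- Assumption `(L)`-a.e. -/
def LaeAssumption (𝒮 : Set Traj) : Prop :=
  (∀ x ∈ 𝒮, PropL 𝒮 x 0) ∧ NullSet 𝒮 {x ∈ 𝒮 | ∃ j, ¬ PropL 𝒮 x j}

/-- Up-down node. -/
def UpDownNode (𝒮 : Set Traj) (x : Traj) (j : ℕ) : Prop :=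
  (∃ y ∈ Cond 𝒮 x j, x j < y (j + 1)) ∧ (∃ y ∈ Cond 𝒮 x j, y (j + 1) < x j)

/-- Flat node. -/
def FlatNode (𝒮 : Set Traj) (x : Traj) (j : ℕ) : Prop :=
  ∀ y ∈ Cond 𝒮 x j, y (j + 1) = x j

/-- Arbitrage node. -/
def ArbitrageNode (𝒮 : Set Traj) (x : Traj) (j : ℕ) : Prop :=
  ¬ UpDownNode 𝒮 x j ∧ ¬ FlatNode 𝒮 x j

/-- Type II arbitrage node. -/
def TypeIINode (𝒮 : Set Traj) (x : Traj) (j : ℕ) : Prop :=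
  ArbitrageNode 𝒮 x j ∧ ¬ ∃ y ∈ Cond 𝒮 x j, y (j + 1) = x j

/-- Trajectory based stopping time. -/
def StoppingTime (𝒮 : Set Traj) (τ : Traj → ℕ∞) : Prop :=
  ∀ x ∈ 𝒮, ∀ y ∈ 𝒮, (∀ k : ℕ, (k : ℕ∞) ≤ τ x → x k = y k) → τ x = τ y

/-- `⊤`-dominant addition on `EReal`, implementing the convention `∞ + (−∞) = ∞`. -/
def eadd (a b : EReal) : EReal := if a = ⊤ ∨ b = ⊤ then ⊤ else a + b

/-- Subtraction `u − v = u + (−v)` with the convention `∞ + (−∞) = ∞`. -/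
def esub (a b : EReal) : EReal := eadd a (-b)

/-- Supermartingale. -/
def TrajSupermartingale (𝒮 : Set Traj) (f : ℕ → Traj → EReal) : Prop :=
  (∀ j, NonAnticipF 𝒮 j (f j)) ∧
  ∀ j, AEOn 𝒮 (fun x => sigmaUp 𝒮 j (f (j + 1)) x ≤ f j x)

/-- An `EReal` below every real is `⊥`. -/
lemma ereal_eq_bot_of_forall_le (a : EReal) (h : ∀ r : ℝ, a ≤ (r : EReal)) : a = ⊥ := by
  induction a using EReal.rec with
  | bot => rfl
  | coe r => have := h (r - 1); norm_cast at this; linarith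
  | top => have := h 0; simp at this

/-- `σ̄` only depends on the values of the integrand on the conditioning set. -/
lemma sigmaUpOn_congr {A : Set Traj} {j : ℕ} {g h : Traj → EReal}
    (hgh : ∀ y ∈ A, g y = h y) : sigmaUpOn A j g = sigmaUpOn A j h := by
  unfold sigmaUpOn
  congr 1
  ext c
  constructor <;> rintro ⟨V0, H0, n0, V, H, h1, h2, h3, h4, h5⟩
  · exact ⟨V0, H0, n0, V, H, h1, h2, h3,
      fun y hy => (hgh y hy) ▸ h4 y hy, h5⟩
  · exact ⟨V0, H0, n0, V, H, h1, h2, h3,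
      fun y hy => (hgh y hy) ▸ h4 y hy, h5⟩

/-- `σ̄` of a function bounded above by a real constant `r` is at most `r`. -/
lemma sigmaUpOn_le_coe {A : Set Traj} {j : ℕ} {g : Traj → EReal} {r : ℝ}
    (hg : ∀ y ∈ A, g y ≤ (r : EReal)) : sigmaUpOn A j g ≤ (r : EReal) := by
  apply sInf_le
  refine ⟨r, fun _ _ => 0, j, fun _ => 0, fun _ _ _ => 0,
    fun _ _ _ _ _ _ => rfl, fun _ _ _ _ _ _ _ => rfl, ?_, ?_, ?_⟩
  · intro m n y _; simp [PiVal]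
  · intro y hy
    have h1 : PiVal j j r (fun _ _ => 0) y = r := by simp [PiVal]
    have h2 : (∑' _ : ℕ, limInfVal j 0 (fun _ _ => 0) y) = 0 := by
      simp [limInfVal, PiVal, Filter.liminf_const]
    rw [h1, h2]
    simpa using hg y hy
  · simp

/-- `σ̄` of a function bounded above by a constant `c` is at most `c`. -/
lemma sigmaUpOn_le_const {A : Set Traj} {j : ℕ} {g : Traj → EReal} {c : EReal}
    (hg : ∀ y ∈ A, g y ≤ c) : sigmaUpOn A j g ≤ c := by
  induction c using EReal.rec with
  | bot =>
    rw [ereal_eq_bot_of_forall_le (sigmaUpOn A j g)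
      (fun r => sigmaUpOn_le_coe (fun y hy => (hg y hy).trans bot_le))]
  | coe r => exact sigmaUpOn_le_coe hg
  | top => exact le_top

/-- Monotonicity of `Ī_j` on a set. -/
lemma IUpOn_mono {A : Set Traj} {j : ℕ} {f g : Traj → ℝ≥0∞}
    (h : ∀ y ∈ A, f y ≤ g y) : IUpOn A j f ≤ IUpOn A j g := by
  apply sInf_le_sInf
  rintro c ⟨V, H, h1, h2, h3, h4⟩
  exact ⟨V, H, h1, h2, fun y hy => (h y hy).trans (h3 y hy), h4⟩

/-- A subset of a null set is null. -/
lemma NullSet.subset {𝒮 E E' : Set Traj} (hE : NullSet 𝒮 E) (hsub : E' ⊆ E) :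
    NullSet 𝒮 E' := by
  unfold NullSet at *
  have hmono : IUpOn 𝒮 0 (fun y => if y ∈ E' then 1 else 0)
      ≤ IUpOn 𝒮 0 (fun y => if y ∈ E then 1 else 0) := by
    apply IUpOn_mono
    intro y _
    by_cases hy : y ∈ E'
    · rw [if_pos hy, if_pos (hsub hy)]
    · rw [if_neg hy]
      exact _root_.zero_le
  rw [hE] at hmono
  exact le_antisymm hmono (_root_.zero_le)

/-- a stopped supermartingale is a supermartingale, under
Assumption (L)-a.e. -/
theorem stopped_supermartingale
    (𝒮 : Set Traj) (hL : LaeAssumption 𝒮)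
    (f : ℕ → Traj → EReal) (hf : TrajSupermartingale 𝒮 f)
    (τ : Traj → ℕ∞) (hτ : StoppingTime 𝒮 τ) :
    TrajSupermartingale 𝒮 (fun j x => f (min (τ x) (j : ℕ∞)).toNat x) := by
  obtain ⟨hfa, hfs⟩ := hf
  -- If `x, y ∈ 𝒮` agree up to time `j` and `τ x ≤ j`, then `τ x = τ y`.
  have key₁ : ∀ j : ℕ, ∀ x ∈ 𝒮, ∀ y ∈ 𝒮, (∀ k ≤ j, x k = y k) →
      τ x ≤ (j : ℕ∞) → τ x = τ y := by
    intro j x hx y hy hxy hle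
    exact hτ x hx y hy (fun k hk => hxy k (by exact_mod_cast hk.trans hle))
  -- If `x, y ∈ 𝒮` agree up to time `j` and `τ x > j`, then `τ y > j`.
  have key₂ : ∀ j : ℕ, ∀ x ∈ 𝒮, ∀ y ∈ 𝒮, (∀ k ≤ j, x k = y k) →
      ¬ τ x ≤ (j : ℕ∞) → ¬ τ y ≤ (j : ℕ∞) := by
    intro j x hx y hy hxy hgt hyle
    exact hgt ((key₁ j y hy x hx (fun k hk => (hxy k hk).symm) hyle) ▸ hyle)
  -- toNat facts
  have toNat_le : ∀ j : ℕ, ∀ x : Traj, τ x ≤ (j : ℕ∞) → ((τ x).toNat : ℕ∞) = τ x ∧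
      (τ x).toNat ≤ j := by
    intro j x hle
    have hne : τ x ≠ ⊤ := fun h => by simp [h] at hle
    have h1 : ((τ x).toNat : ℕ∞) = τ x := ENat.coe_toNat hne
    refine ⟨h1, ?_⟩
    have := h1 ▸ hle
    exact_mod_cast this
  constructor
  · -- non-anticipativity of the stopped process
    intro j x hx y hy hxy
    show f (min (τ x) (j : ℕ∞)).toNat x = f (min (τ y) (j : ℕ∞)).toNat y
    by_cases hle : τ x ≤ (j : ℕ∞)
    · have hτxy := key₁ j x hx y hy hxy hle
      obtain ⟨h1, h2⟩ := toNat_le j x hle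
      rw [← hτxy, min_eq_left hle]
      exact hfa (τ x).toNat x hx y hy (fun k hk => hxy k (hk.trans h2))
    · have hgt' := key₂ j x hx y hy hxy hle
      rw [min_eq_right (le_of_not_ge hle), min_eq_right (le_of_not_ge hgt'),
        ENat.toNat_coe]
      exact hfa j x hx y hy hxy
  · -- a.e. supermartingale inequality
    intro j
    have hj := hfs j
    unfold AEOn at hj ⊢
    refine hj.subset ?_
    rintro x ⟨hx, hnx⟩
    refine ⟨hx, fun hP => hnx ?_⟩
    show sigmaUp 𝒮 j (fun y => f (min (τ y) ((j + 1 : ℕ) : ℕ∞)).toNat y) x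
      ≤ f (min (τ x) (j : ℕ∞)).toNat x
    by_cases hle : τ x ≤ (j : ℕ∞)
    · -- stopped before j: the stopped f_{j+1} is constant on the cone
      obtain ⟨h1, h2⟩ := toNat_le j x hle
      have hconst : ∀ y ∈ Cond 𝒮 x j,
          f (min (τ y) ((j + 1 : ℕ) : ℕ∞)).toNat y
            = f (min (τ x) (j : ℕ∞)).toNat x := by
        rintro y ⟨hy, hyx⟩
        have hτxy : τ x = τ y := key₁ j x hx y hy (fun k hk => (hyx k hk).symm) hle
        have hle' : τ y ≤ ((j + 1 : ℕ) : ℕ∞) := by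
          rw [← hτxy]; exact hle.trans (by exact_mod_cast Nat.le_succ j)
        rw [min_eq_left hle', min_eq_left hle, ← hτxy]
        exact hfa (τ x).toNat y hy x hx (fun k hk => hyx k (hk.trans h2))
      exact sigmaUpOn_le_const (fun y hy => le_of_eq (hconst y hy))
    · -- not yet stopped: coincides with the original process on the cone
      have heq : sigmaUp 𝒮 j (fun y => f (min (τ y) ((j + 1 : ℕ) : ℕ∞)).toNat y) x
          = sigmaUp 𝒮 j (f (j + 1)) x := by
        unfold sigmaUp
        apply sigmaUpOn_congr
        rintro y ⟨hy, hyx⟩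
        have hygt := key₂ j x hx y hy (fun k hk => (hyx k hk).symm) hle
        have hcast : ((j + 1 : ℕ) : ℕ∞) ≤ τ y := by
          have h := Order.add_one_le_of_lt (lt_of_not_ge hygt)
          exact_mod_cast h
        rw [min_eq_right hcast, ENat.toNat_coe]
      have hmx : min (τ x) (j : ℕ∞) = (j : ℕ∞) := min_eq_right (le_of_not_ge hle)
      rw [heq, hmx, ENat.toNat_coe]
      exact hP

end
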